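/- Let q ≥ 3 be an integer, η ∈ (0, 1), and let (x_t)_{t ≥ 0} be a positive real sequence satisfying x_{t+1} = x_t + η C_t x_t^{q−1} with c ≤ C_t ≤ C for positive constants c ≤ C. Then for every A > x_0, the first time T with x_T ≥ A satisfies T ≤ (1/(η c)) · ( D / x_0^{q−2} ) for some constant D depending only on q and the ratio C/c (assuming η C A^{q-2} ≤ 1/2); i.e., the escape time scales as Θ(1/(η x_0^{q−2})). -/
import Mathlib

lemma aux_key (m : ℕ) (hm : 1 ≤ m) (u u' : ℝ) (hu'0 : 0 ≤ u') (hu'u : u' ≤ u)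
    (hu : u ≤ 1/2) : 1 ≤ (1 - (2/3)*u') * (1+u)^m := by
  have hu'half : u' ≤ 1/2 := le_trans hu'u hu
  have h1 : (1:ℝ) + u' ≤ (1+u')^m := by
    calc (1:ℝ) + u' = (1+u')^1 := (pow_one _).symm
    _ ≤ (1+u')^m := pow_le_pow_right₀ (by linarith) hm
  have h2 : (1+u')^m ≤ (1+u)^m := pow_le_pow_left₀ (by linarith) (by linarith) m
  have h3 : (0:ℝ) ≤ 1 - (2/3)*u' := by linarith
  have h4 : 1 ≤ (1 - (2/3)*u') * (1+u') := by nlinarith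
  calc (1:ℝ) ≤ (1 - (2/3)*u') * (1+u') := h4
  _ ≤ (1 - (2/3)*u') * (1+u)^m := by nlinarith

theorem stmt_10 (q : ℕ) (hq : 3 ≤ q) (r : ℝ) (hr : 1 ≤ r) :
    ∃ D : ℝ, 0 < D ∧
      ∀ (c C : ℝ), 0 < c → C = r * c →
      ∀ (η : ℝ), 0 < η → η < 1 →
      ∀ (Ct : ℕ → ℝ), (∀ t, c ≤ Ct t ∧ Ct t ≤ C) →
      ∀ (x : ℕ → ℝ), (∀ t, 0 < x t) →
      (∀ t, x (t + 1) = x t + η * Ct t * x t ^ (q - 1)) →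
      ∀ A : ℝ, x 0 < A → η * C * A ^ (q - 2) ≤ 1 / 2 →
      ∃ T : ℕ, A ≤ x T ∧ (T : ℝ) ≤ (1 / (η * c)) * (D / x 0 ^ (q - 2)) := by
  refine ⟨2, by norm_num, ?_⟩
  intro c C hc hC η hη hη1 Ct hCt x hx hrec A hA hstep
  set m := q - 2 with hm
  have hm1 : 1 ≤ m := by omega
  have hq1 : q - 1 = m + 1 := by omega
  have hA0 : 0 < A := lt_trans (hx 0) hA
  have hrec' : ∀ t, x (t+1) = x t * (1 + η * Ct t * x t ^ m) := by
    intro t; rw [hrec t, hq1, pow_succ]; ring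
  -- key per-step estimate
  have key : ∀ t, x t ≤ A → 1 / x (t+1) ^ m ≤ 1 / x t ^ m - (2/3)*(η*c) := by
    intro t ht
    have hxt := hx t
    have hxm : 0 < x t ^ m := pow_pos hxt m
    set u' := η * c * x t ^ m with hu'
    set u := η * Ct t * x t ^ m with hu
    have hCt1 := (hCt t).1
    have hCt2 := (hCt t).2
    have hu'0 : 0 ≤ u' := by positivity
    have hu'u : u' ≤ u := by
      apply mul_le_mul_of_nonneg_right _ (le_of_lt hxm)
      exact mul_le_mul_of_nonneg_left hCt1 (le_of_lt hη)
    have hxA : x t ^ m ≤ A ^ m := pow_le_pow_left₀ (le_of_lt hxt) ht m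
    have hCtC : Ct t ≤ C := hCt2
    have hCpos : 0 < C := by nlinarith
    have huhalf : u ≤ 1/2 := by
      have h1 : u ≤ η * C * A ^ m := by
        have : 0 < η := hη
        have hCtpos : 0 ≤ Ct t := by nlinarith
        have hnn : 0 ≤ η * C := by positivity
        calc u = η * Ct t * x t ^ m := rfl
        _ ≤ η * C * x t ^ m := by nlinarith
        _ ≤ η * C * A ^ m := mul_le_mul_of_nonneg_left hxA hnn
      linarith [hstep]
    have hkey := aux_key m hm1 u u' hu'0 hu'u huhalf
    have hx1 : x (t+1) ^ m = x t ^ m * (1+u)^m := by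
      rw [hrec' t, mul_pow]
    have hupos : (0:ℝ) < 1 + u := by
      have : 0 ≤ u := le_trans hu'0 hu'u
      linarith
    have hpow : 0 < (1+u)^m := pow_pos hupos m
    rw [hx1]
    rw [div_le_iff₀ (by positivity)]
    have hexp : (1 / x t ^ m - 2 / 3 * (η * c)) * (x t ^ m * (1 + u) ^ m)
        = (1 - (2/3) * u') * (1+u)^m := by
      field_simp [hu']
      ring
    rw [hexp]
    linarith
  -- cumulative estimate
  have cum : ∀ t, (∀ s, s < t → x s ≤ A) →
      1 / x t ^ m ≤ 1 / x 0 ^ m - (2/3)*(η*c)*t := by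
    intro t
    induction t with
    | zero => intro _; simp
    | succ n ih =>
      intro h
      have h1 : 1 / x n ^ m ≤ 1 / x 0 ^ m - (2/3)*(η*c)*n := by
        exact ih (fun s hs => h s (by omega))
      have h2 := key n (h n (by omega))
      push_cast
      linarith
  -- existence of escape time
  have hexists : ∃ T, A ≤ x T := by
    by_contra hcon
    push_neg at hcon
    obtain ⟨N, hN⟩ := exists_nat_gt ((1 / x 0 ^ m) / ((2/3)*(η*c)))
    have h1 := cum N (fun s _ => le_of_lt (hcon s))
    have h2 : 0 < 1 / x N ^ m := by
      have := pow_pos (hx N) m; positivity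
    have h3 : 0 < (2/3)*(η*c) := by positivity
    rw [div_lt_iff₀ h3] at hN
    linarith [mul_comm ((2:ℝ)/3*(η*c)) (N:ℝ)]
  classical
  set T := Nat.find hexists with hT
  refine ⟨T, Nat.find_spec hexists, ?_⟩
  have hlt : ∀ s, s < T → x s ≤ A := by
    intro s hs
    exact le_of_lt (lt_of_not_ge (Nat.find_min hexists hs))
  have h1 := cum T hlt
  have h2 : 0 < 1 / x T ^ m := by
    have := pow_pos (hx T) m; positivity
  have h3 : (2/3)*(η*c)*(T:ℝ) < 1 / x 0 ^ m := by linarith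
  have hx0m : 0 < x 0 ^ m := pow_pos (hx 0) m
  have h4 : (1 / x 0 ^ m) * x 0 ^ m = 1 := by field_simp
  have heq : (1 / (η * c)) * (2 / x 0 ^ m) = 2 / (η * c * x 0 ^ m) := by
    field_simp
  rw [heq, le_div_iff₀ (by positivity)]
  nlinarith [mul_lt_mul_of_pos_right h3 hx0m]
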